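/- Let f : ℝⁿ → ℝ be convex, differentiable, and L-smooth with L > 0. Then the gradient of f is co-coercive with constant 1/L: ⟨∇f(x) − ∇f(y), x − y⟩ ≥ (1/L)‖∇f(x) − ∇f(y)‖² for all x, y ∈ ℝⁿ. -/

import Mathlib

open scoped RealInnerProductSpace

private lemma first_order_aux
    (n : ℕ) (f : EuclideanSpace ℝ (Fin n) → ℝ)
    (f' : EuclideanSpace ℝ (Fin n) → EuclideanSpace ℝ (Fin n))
    (hgrad : ∀ x, HasGradientAt f (f' x) x)
    (hconv : ConvexOn ℝ Set.univ f)
    (x z : EuclideanSpace ℝ (Fin n)) :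
    f x + ⟪f' x, z - x⟫ ≤ f z := by
  set c : ℝ →ᵃ[ℝ] EuclideanSpace ℝ (Fin n) := AffineMap.lineMap x z with hc
  have hg : ConvexOn ℝ Set.univ (f ∘ c) := by
    simpa using hconv.comp_affineMap c
  have hcur : HasDerivAt (fun t : ℝ => c t) (z - x) 0 := by
    have : (fun t : ℝ => c t) = fun t : ℝ => t • (z - x) + x := by
      funext t
      simp [hc, AffineMap.lineMap_apply]
    rw [this]
    simpa using ((hasDerivAt_id (0:ℝ)).smul_const (z - x)).add_const x
  have hc0 : c 0 = x := by simp [hc]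
  have hd : HasDerivAt (f ∘ c) ⟪f' x, z - x⟫ 0 := by
    have hF := (hgrad x).hasFDerivAt
    rw [← hc0] at hF
    have := hF.comp_hasDerivAt 0 hcur
    simpa [hc0] using this
  have := hg.le_slope_of_hasDerivAt (Set.mem_univ (0:ℝ)) (Set.mem_univ (1:ℝ))
    one_pos hd
  have hs : slope (f ∘ c) 0 1 = f z - f x := by
    simp [slope_def_field, hc0, hc, Function.comp]
  rw [hs] at this
  linarith

private lemma key_ineq
    (n : ℕ) (f : EuclideanSpace ℝ (Fin n) → ℝ)
    (f' : EuclideanSpace ℝ (Fin n) → EuclideanSpace ℝ (Fin n))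
    (hgrad : ∀ x, HasGradientAt f (f' x) x)
    (hconv : ConvexOn ℝ Set.univ f)
    (L : ℝ) (hL : 0 < L)
    (hsm : ∀ x y : EuclideanSpace ℝ (Fin n),
      f x ≤ f y + ⟪f' y, x - y⟫ + L / 2 * ‖x - y‖ ^ 2)
    (x y : EuclideanSpace ℝ (Fin n)) :
    f x + ⟪f' x, y - x⟫ + 1 / (2 * L) * ‖f' y - f' x‖ ^ 2 ≤ f y := by
  set g : EuclideanSpace ℝ (Fin n) := f' y - f' x with hgdef
  set z : EuclideanSpace ℝ (Fin n) := y - L⁻¹ • g with hz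
  have h1 := first_order_aux n f f' hgrad hconv x z
  have h2 := hsm z y
  have hzy : z - y = -(L⁻¹ • g) := by rw [hz]; abel
  have hnorm : ‖z - y‖ ^ 2 = L⁻¹ ^ 2 * ‖g‖ ^ 2 := by
    rw [hzy, norm_neg, norm_smul]
    simp [abs_of_pos (inv_pos.mpr hL), mul_pow]
  have hiy : ⟪f' y, z - y⟫ = -(L⁻¹ * ⟪f' y, g⟫) := by
    rw [hzy, inner_neg_right, real_inner_smul_right]
  have hix : ⟪f' x, z - x⟫ = ⟪f' x, y - x⟫ - L⁻¹ * ⟪f' x, g⟫ := by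
    have : z - x = (y - x) - L⁻¹ • g := by rw [hz]; abel
    rw [this, inner_sub_right, real_inner_smul_right]
  have hgg : ⟪f' y, g⟫ - ⟪f' x, g⟫ = ‖g‖ ^ 2 := by
    rw [← inner_sub_left, ← hgdef, real_inner_self_eq_norm_sq]
  rw [hiy, hnorm] at h2
  rw [hix] at h1
  have hL' : L ≠ 0 := ne_of_gt hL
  have h3 : L⁻¹ * ⟪f' y, g⟫ - L⁻¹ * ⟪f' x, g⟫ = L⁻¹ * ‖g‖ ^ 2 := by
    rw [← mul_sub, hgg]
  have h4 : L / 2 * (L⁻¹ ^ 2 * ‖g‖ ^ 2) = 1 / (2 * L) * ‖g‖ ^ 2 := by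
    field_simp
  have h5 : L⁻¹ * ‖g‖ ^ 2 = 2 * (1 / (2 * L) * ‖g‖ ^ 2) := by
    field_simp
  linarith

/-- The gradient of a convex, differentiable, L-smooth function is
co-coercive with constant 1/L. -/
theorem smooth_convex_gradient_cocoercive
    (n : ℕ) (f : EuclideanSpace ℝ (Fin n) → ℝ)
    (f' : EuclideanSpace ℝ (Fin n) → EuclideanSpace ℝ (Fin n))
    (hgrad : ∀ x, HasGradientAt f (f' x) x)
    (hconv : ConvexOn ℝ Set.univ f)
    (L : ℝ) (hL : 0 < L)
    (hsm : ∀ x y : EuclideanSpace ℝ (Fin n),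
      f x ≤ f y + ⟪f' y, x - y⟫ + L / 2 * ‖x - y‖ ^ 2) :
    ∀ x y : EuclideanSpace ℝ (Fin n),
      ⟪f' x - f' y, x - y⟫ ≥ 1 / L * ‖f' x - f' y‖ ^ 2 := by
  intro x y
  have h1 := key_ineq n f f' hgrad hconv L hL hsm x y
  have h2 := key_ineq n f f' hgrad hconv L hL hsm y x
  have e1 : ⟪f' x - f' y, x - y⟫ = ⟪f' x, x - y⟫ - ⟪f' y, x - y⟫ := by
    rw [inner_sub_left]
  have e2 : ⟪f' y, x - y⟫ = -⟪f' y, y - x⟫ := by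
    rw [← inner_neg_right]; congr 1; abel
  have e3 : ‖f' y - f' x‖ = ‖f' x - f' y‖ := norm_sub_rev _ _
  have e4 : ⟪f' x, y - x⟫ = -⟪f' x, x - y⟫ := by
    rw [← inner_neg_right]; congr 1; abel
  rw [e3, e4] at h1
  rw [e1]
  have hL' : L ≠ 0 := ne_of_gt hL
  have h6 : 1 / L * ‖f' x - f' y‖ ^ 2 = 2 * (1 / (2 * L) * ‖f' x - f' y‖ ^ 2) := by
    field_simp
  linarith
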